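/- For every one-sided MTL formula φ there is a bound k_φ ∈ ℕ such that the constructed 1-ATA A'_φ has width at most k_φ, i.e., every configuration reachable from the initial configuration {(φ_init,0)} of A'_φ by timed and discrete transitions contains at most k_φ active states. -/

import Mathlib

open scoped Classical NNReal

namespace ATAPaper

/-! ## Intervals with natural endpoints (possibly unbounded) -/

inductive NInterval where
  | cc (a b : ℕ)
  | co (a b : ℕ)
  | oc (a b : ℕ)
  | oo (a b : ℕ)
  | ci (a : ℕ)
  | oi (a : ℕ)
deriving DecidableEq

/-- Membership of a nonnegative real in an interval. -/
def NInterval.mem (v : ℝ≥0) : NInterval → Prop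
  | .cc a b => (a : ℝ≥0) ≤ v ∧ v ≤ (b : ℝ≥0)
  | .co a b => (a : ℝ≥0) ≤ v ∧ v < (b : ℝ≥0)
  | .oc a b => (a : ℝ≥0) < v ∧ v ≤ (b : ℝ≥0)
  | .oo a b => (a : ℝ≥0) < v ∧ v < (b : ℝ≥0)
  | .ci a => (a : ℝ≥0) ≤ v
  | .oi a => (a : ℝ≥0) < v

/-- The largest constant appearing in an interval. -/
def NInterval.bound : NInterval → ℕ
  | .cc a b | .co a b | .oc a b | .oo a b => max a b
  | .ci a | .oi a => a

/-! ## Transition formulas `Φ(Q)` with reset `x.φ` and deactivation `x̄.φ` -/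

inductive TF (Q : Type*) where
  | tt
  | ff
  | loc (q : Q)
  | guard (I : NInterval)
  | and (φ ψ : TF Q)
  | or (φ ψ : TF Q)
  | reset (φ : TF Q)
  | deact (φ : TF Q)

/-- A state of a 1-ATA is a location together with a clock value which is
either inactive (`none` = ⊥) or a nonnegative real.  A configuration is a
finite set of states. -/
abbrev Config (Q : Type*) := Finset (Q × Option ℝ≥0)

section BasicDefs

variable {Q A : Type*}

/-- `M ⊨_v φ`. -/
def TF.sat (M : Config Q) : TF Q → Option ℝ≥0 → Prop
  | .tt, _ => True
  | .ff, _ => False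
  | .loc q, v => (q, v) ∈ M
  | .guard I, v => v = none ∨ ∃ r, v = some r ∧ I.mem r
  | .and φ ψ, v => φ.sat M v ∧ ψ.sat M v
  | .or φ ψ, v => φ.sat M v ∨ ψ.sat M v
  | .reset φ, _ => φ.sat M (some 0)
  | .deact φ, _ => φ.sat M none

/-- `M` is a minimal model of `φ` on `v`. -/
def MinModel (M : Config Q) (v : Option ℝ≥0) (φ : TF Q) : Prop :=
  φ.sat M v ∧ ∀ M' ⊂ M, ¬ φ.sat M' v

/-- The disjuncts of a formula (assumed to be in disjunctive normal form). -/
def TF.disjuncts : TF Q → List (TF Q)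
  | .or φ ψ => φ.disjuncts ++ ψ.disjuncts
  | φ => [φ]

/-- The intervals occurring (anywhere) in a transition formula. -/
def TF.guards : TF Q → List NInterval
  | .guard I => [I]
  | .and φ ψ | .or φ ψ => φ.guards ++ ψ.guards
  | .reset φ | .deact φ => φ.guards
  | _ => []

/-! ## One-clock alternating timed automata with deactivation -/

structure OneATA (Q A : Type*) where
  init : Q
  final : Set Q
  delta : Q → A → Option (TF Q)

/-- `C` is one of the disjuncts of `δ(q,a)`. -/
def OneATA.isTarget (𝒜 : OneATA Q A) (q : Q) (a : A) (C : TF Q) : Prop :=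
  ∃ φ, 𝒜.delta q a = some φ ∧ C ∈ φ.disjuncts

/-- Time elapse on a configuration: add `d` to every active value, keep `⊥`. -/
noncomputable def Config.delay (γ : Config Q) (d : ℝ≥0) : Config Q :=
  γ.image (fun s => (s.1, s.2.map (· + d)))

/-- Discrete transition `γ →^{a,C} γ'` where the target `χ` assigns to each
state of `γ` a disjunct of the corresponding transition formula. -/
def OneATA.DStep (𝒜 : OneATA Q A) (γ : Config Q) (a : A)
    (χ : Q × Option ℝ≥0 → TF Q) (γ' : Config Q) : Prop :=
  (∀ s ∈ γ, 𝒜.isTarget s.1 a (χ s)) ∧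
  ∃ Mo : Q × Option ℝ≥0 → Config Q,
    (∀ s ∈ γ, MinModel (Mo s) s.2 (χ s)) ∧ γ' = γ.biUnion Mo

/-- Combined transition `γ →^{d,a,C} γ'`. -/
def OneATA.Step (𝒜 : OneATA Q A) (γ : Config Q) (d : ℝ≥0) (a : A)
    (χ : Q × Option ℝ≥0 → TF Q) (γ' : Config Q) : Prop :=
  𝒜.DStep (γ.delay d) a χ γ'

/-- A configuration is accepting if all its locations are accepting. -/
def OneATA.AcceptingCfg (𝒜 : OneATA Q A) (γ : Config Q) : Prop :=
  ∀ s ∈ γ, s.1 ∈ 𝒜.final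

/-- Accepting runs on (finite) timed words. -/
inductive OneATA.AccRun (𝒜 : OneATA Q A) : Config Q → List (ℝ≥0 × A) → Prop
  | nil {γ} : 𝒜.AcceptingCfg γ → 𝒜.AccRun γ []
  | cons {γ γ' : Config Q} {d : ℝ≥0} {a : A} {w : List (ℝ≥0 × A)}
      (χ : Q × Option ℝ≥0 → TF Q) :
      𝒜.Step γ d a χ γ' → 𝒜.AccRun γ' w → 𝒜.AccRun γ ((d, a) :: w)

/-- The language of a 1-ATA. -/
def OneATA.Lang (𝒜 : OneATA Q A) : Set (List (ℝ≥0 × A)) :=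
  {w | 𝒜.AccRun {(𝒜.init, some 0)} w}

/-- Reachability between configurations by timed and discrete transitions. -/
inductive OneATA.Reach (𝒜 : OneATA Q A) : Config Q → Config Q → Prop
  | refl (γ) : 𝒜.Reach γ γ
  | delay {γ γ'} (d : ℝ≥0) : 𝒜.Reach γ γ' → 𝒜.Reach γ (γ'.delay d)
  | step {γ γ' γ''} (a : A) (χ) : 𝒜.Reach γ γ' → 𝒜.DStep γ' a χ γ'' → 𝒜.Reach γ γ''

/-- The width of a configuration: the number of active states. -/
noncomputable def Config.width (γ : Config Q) : ℕ :=
  (γ.filter (fun s => s.2 ≠ none)).card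

/-- The 1-ATA has width at most `k`. -/
def OneATA.WidthBounded (𝒜 : OneATA Q A) (k : ℕ) : Prop :=
  ∀ γ, 𝒜.Reach {(𝒜.init, some 0)} γ → γ.width ≤ k

/-- All constants appearing in the automaton are at most `M`. -/
def OneATA.BoundedBy (𝒜 : OneATA Q A) (M : ℕ) : Prop :=
  ∀ q a φ, 𝒜.delta q a = some φ → ∀ I ∈ φ.guards, I.bound ≤ M

/-! ## Region equivalence and entailment on configurations -/

/-- `γ ≃_M γ'` via the bijection `h`. -/
def RegionEquivWith (M : ℕ) (γ γ' : Config Q)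
    (h : Q × Option ℝ≥0 → Q × Option ℝ≥0) : Prop :=
  Set.BijOn h ↑γ ↑γ' ∧
  (∀ s ∈ γ, (h s).1 = s.1) ∧
  (∀ s ∈ γ, ((h s).2 = none ↔ s.2 = none)) ∧
  (∀ s ∈ γ, ∀ r r', s.2 = some r → (h s).2 = some r' →
    ((r ≤ (M : ℝ≥0)) ↔ (r' ≤ (M : ℝ≥0))) ∧
    (r ≤ (M : ℝ≥0) →
      (⌊(r : ℝ)⌋ = ⌊(r' : ℝ)⌋ ∧ (Int.fract (r : ℝ) = 0 ↔ Int.fract (r' : ℝ) = 0)))) ∧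
  (∀ s₁ ∈ γ, ∀ s₂ ∈ γ, ∀ r₁ r₂ r₁' r₂',
    s₁.2 = some r₁ → s₂.2 = some r₂ → (h s₁).2 = some r₁' → (h s₂).2 = some r₂' →
    r₁ ≤ (M : ℝ≥0) → r₂ ≤ (M : ℝ≥0) →
    (Int.fract (r₁ : ℝ) ≤ Int.fract (r₂ : ℝ) ↔ Int.fract (r₁' : ℝ) ≤ Int.fract (r₂' : ℝ)))

/-- Region equivalence `γ ≃_M γ'`. -/
def RegionEquiv (M : ℕ) (γ γ' : Config Q) : Prop := ∃ h, RegionEquivWith M γ γ' h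

/-- Configuration entailment `γ ⊨_M γ'` : some subset of `γ'` is region equivalent
to `γ`. -/
def CfgEntails (M : ℕ) (γ γ' : Config Q) : Prop :=
  ∃ γ'' ⊆ γ', RegionEquiv M γ γ''

end BasicDefs


/-! ## MTL (negation normal form) -/

inductive MTL (A : Type*) where
  | atom (a : A)
  | natom (a : A)
  | conj (φ ψ : MTL A)
  | disj (φ ψ : MTL A)
  | next (I : NInterval) (φ : MTL A)
  | untl (I : NInterval) (φ ψ : MTL A)

section MTLDefs

variable {A : Type*}

/-- Accumulated time `Σ_{c=1}^{p} d_c` of the first `p` letters of a timed word. -/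
def twtime (w : List (ℝ≥0 × A)) (p : ℕ) : ℝ≥0 := ((w.take p).map Prod.fst).sum

/-- `(w, i) ⊨ φ` (positions are 0-based). -/
def MTL.holdsAt (w : List (ℝ≥0 × A)) : MTL A → ℕ → Prop
  | .atom a, i => ∃ h : i < w.length, (w.get ⟨i, h⟩).2 = a
  | .natom a, i => ∃ h : i < w.length, (w.get ⟨i, h⟩).2 ≠ a
  | .conj φ ψ, i => φ.holdsAt w i ∧ ψ.holdsAt w i
  | .disj φ ψ, i => φ.holdsAt w i ∨ ψ.holdsAt w i
  | .next I φ, i => ∃ h : i + 1 < w.length, φ.holdsAt w (i + 1) ∧ I.mem (w.get ⟨i + 1, h⟩).1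
  | .untl I φ ψ, i => ∃ k, i ≤ k ∧ k < w.length ∧ ψ.holdsAt w k ∧
      I.mem (twtime w (k + 1) - twtime w (i + 1)) ∧
      ∀ j, i ≤ j → j < k → φ.holdsAt w j

/-- The language of an MTL formula (`w ⊨ φ` iff `φ` holds at the first position). -/
def MTL.Lang (φ : MTL A) : Set (List (ℝ≥0 × A)) := {w | φ.holdsAt w 0}

/-- Pure LTL formulas: every interval is `[0, ∞)`. -/
def MTL.isPure : MTL A → Bool
  | .atom _ | .natom _ => true
  | .conj φ ψ | .disj φ ψ => φ.isPure && ψ.isPure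
  | .next I φ => decide (I = NInterval.ci 0) && φ.isPure
  | .untl I φ ψ => decide (I = NInterval.ci 0) && φ.isPure && ψ.isPure

/-- The subformulas of an MTL formula. -/
def MTL.subfs : MTL A → List (MTL A)
  | .atom a => [.atom a]
  | .natom a => [.natom a]
  | .conj φ ψ => .conj φ ψ :: (φ.subfs ++ ψ.subfs)
  | .disj φ ψ => .disj φ ψ :: (φ.subfs ++ ψ.subfs)
  | .next I φ => .next I φ :: φ.subfs
  | .untl I φ ψ => .untl I φ ψ :: (φ.subfs ++ ψ.subfs)

/-- One-sided MTL: in every Until, the left argument is a pure LTL formula. -/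
def MTL.oneSided : MTL A → Prop
  | .atom _ | .natom _ => True
  | .conj φ ψ | .disj φ ψ => φ.oneSided ∧ ψ.oneSided
  | .next _ φ => φ.oneSided
  | .untl _ φ ψ => φ.isPure = true ∧ ψ.oneSided

/-! ## The MTL-to-1-ATA construction with deactivation -/

/-- Locations of the constructed automaton: the initial location `φ_init`,
locations for formulas (in particular Until subformulas and `φ` itself), and
locations `(X_I ψ)ʳ`. -/
inductive MLoc (A : Type*) where
  | start
  | form (ψ : MTL A)
  | nextr (I : NInterval) (ψ : MTL A)

/-- Prefix `x̄.` if `ψ` is pure LTL, and nothing otherwise. -/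
def barP (ψ : MTL A) (φ : TF (MLoc A)) : TF (MLoc A) :=
  if ψ.isPure then .deact φ else φ

/-- Prefix `x̄.` if `ψ` is pure LTL, and `x.` otherwise. -/
def rhoP (ψ : MTL A) (φ : TF (MLoc A)) : TF (MLoc A) :=
  if ψ.isPure then .deact φ else .reset φ

variable [DecidableEq A]

/-- The transition formula `δ(ψ, a)` for subformulas `ψ`. -/
def dform : MTL A → A → TF (MLoc A)
  | .atom b, a => if b = a then .tt else .ff
  | .natom b, a => if b = a then .ff else .tt
  | .conj φ ψ, a => .and (barP φ (dform φ a)) (barP ψ (dform ψ a))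
  | .disj φ ψ, a => .or (barP φ (dform φ a)) (barP ψ (dform ψ a))
  | .next I ψ, _ => .reset (.loc (.nextr I ψ))
  | .untl I φ ψ, a =>
      .or (.and (rhoP ψ (dform ψ a)) (.guard I))
          (.and (rhoP φ (dform φ a)) (.loc (.form (.untl I φ ψ))))

/-- The transition function of the constructed automaton `A'_φ`. -/
def mlocDelta (φ₀ : MTL A) : MLoc A → A → Option (TF (MLoc A))
  | .start, a => some (rhoP φ₀ (dform φ₀ a))
  | .form ψ, a => some (dform ψ a)
  | .nextr I ψ, a => some (.and (.guard I) (rhoP ψ (dform ψ a)))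

/-- The 1-ATA `A'_φ` constructed from an MTL formula `φ`:
initial location `φ_init`, no accepting locations. -/
def ataOf (φ : MTL A) : OneATA (MLoc A) A :=
  { init := .start, final := ∅, delta := mlocDelta φ }

end MTLDefs

section KB
variable {A : Type*}
/-- The recursive width bound `k_ψ`. -/
def kBound : MTL A → ℕ
  | .atom _ | .natom _ => 1
  | .conj φ ψ => if (MTL.conj φ ψ).isPure then 1 else kBound φ + kBound ψ
  | .disj φ ψ => if (MTL.disj φ ψ).isPure then 1 else max (kBound φ) (kBound ψ)
  | .next I φ => if (MTL.next I φ).isPure then 1 else kBound φ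
  | .untl I φ ψ => if (MTL.untl I φ ψ).isPure then 1 else kBound ψ
end KB


/-! ## Zones (variables `x_{q,i}`), nodes and their configuration semantics -/

section ZoneDefs

variable {Q A : Type*}

/-- A (semantic) zone: a finite set of variables `x_{q,i}` together with the
set of valuations satisfying its constraints. -/
structure SemZone (Q : Type*) where
  vars : Finset (Q × ℕ)
  val : ((Q × ℕ) → ℝ≥0) → Prop

/-- `γ` satisfies the node `(Z, IA)` via the surjection `h`. -/
def NodeSatVia (Z : SemZone Q) (IA : Finset (Q × ℕ)) (γ : Config Q)
    (h : Q × ℕ → Q × Option ℝ≥0) : Prop :=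
  (∀ y ∈ Z.vars ∪ IA, (h y).1 = y.1) ∧
  (∀ y ∈ Z.vars ∪ IA, h y ∈ γ) ∧
  (∀ s ∈ γ, ∃ y ∈ Z.vars ∪ IA, h y = s) ∧
  (∀ y ∈ IA, (h y).2 = none) ∧
  ∃ ν : (Q × ℕ) → ℝ≥0, (∀ y ∈ Z.vars, (h y).2 = some (ν y)) ∧ Z.val ν

/-- `γ ∈ ⟦(Z, IA)⟧`. -/
def NodeSat (Z : SemZone Q) (IA : Finset (Q × ℕ)) (γ : Config Q) : Prop :=
  ∃ h, NodeSatVia Z IA γ h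

/-- The special empty node `(Z_∅, {})`, satisfied exactly by the empty
configuration. -/
def emptySemZone {Q : Type*} : SemZone Q := ⟨∅, fun _ => True⟩

/-- The initial node `((x_{q₀,1} = 0), ∅)`. -/
def initSemZone (𝒜 : OneATA Q A) : SemZone Q :=
  ⟨{(𝒜.init, 1)}, fun ν => ν (𝒜.init, 1) = 0⟩

/-! ### Simple clauses and the successor computation -/

/-- A clause is a conjunction of atoms of the form `true`, `false`, `q`, `I`,
`x.q`, `x̄.q`. -/
def TF.isSimpleConj : TF Q → Bool
  | .tt => true
  | .ff => true
  | .loc _ => true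
  | .guard _ => true
  | .reset (.loc _) => true
  | .deact (.loc _) => true
  | .and φ ψ => φ.isSimpleConj && ψ.isSimpleConj
  | _ => false

/-- Every transition formula of the automaton is in disjunctive normal form. -/
def OneATA.normalized (𝒜 : OneATA Q A) : Prop :=
  ∀ q a φ, 𝒜.delta q a = some φ → ∀ C ∈ φ.disjuncts, C.isSimpleConj = true

/-- The interval atoms of a clause. -/
def TF.topGuards : TF Q → List NInterval
  | .guard I => [I]
  | .and φ ψ => φ.topGuards ++ ψ.topGuards
  | _ => []

/-- The location atoms `q` of a clause. -/
def TF.atomLocs : TF Q → List Q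
  | .loc q => [q]
  | .and φ ψ => φ.atomLocs ++ ψ.atomLocs
  | _ => []

/-- The reset atoms `x.q` of a clause. -/
def TF.resetLocs : TF Q → List Q
  | .reset (.loc q) => [q]
  | .and φ ψ => φ.resetLocs ++ ψ.resetLocs
  | _ => []

/-- The deactivation atoms `x̄.q` of a clause. -/
def TF.deactLocs : TF Q → List Q
  | .deact (.loc q) => [q]
  | .and φ ψ => φ.deactLocs ++ ψ.deactLocs
  | _ => []

/-- The inactive variable set of the successor node: `x'_{q,0}` for every atom
`x̄.q`, and for every atom `q` of a clause of an inactive variable. -/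
noncomputable def succIA (Z : SemZone Q) (IA : Finset (Q × ℕ))
    (T : Q × ℕ → TF Q) : Finset (Q × ℕ) :=
  ((Z.vars ∪ IA).biUnion fun y => ((T y).deactLocs.toFinset).image fun q => (q, 0)) ∪
  (IA.biUnion fun y => ((T y).atomLocs.toFinset).image fun q => (q, 0))

/-- Number of active variables whose clause contains the atom `q`. -/
noncomputable def copyCount (Z : SemZone Q) (T : Q × ℕ → TF Q) (q : Q) : ℕ :=
  (Z.vars.filter fun y => q ∈ (T y).atomLocs).card

/-- The active variable set of the successor node: `x'_{q,1}` for resets, and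
fresh variables `x'_{q,ℓ}` with `2 ≤ ℓ` (smallest free indices) for atoms `q`
of clauses of active variables. -/
noncomputable def succVars (Z : SemZone Q) (IA : Finset (Q × ℕ))
    (T : Q × ℕ → TF Q) : Finset (Q × ℕ) :=
  (((Z.vars ∪ IA).biUnion fun y => (T y).resetLocs.toFinset).image fun q => (q, 1)) ∪
  ((Z.vars.biUnion fun y => (T y).atomLocs.toFinset).biUnion fun q =>
    (Finset.Icc 2 (copyCount Z T q + 1)).image fun i => (q, i))

/-- The successor computation on nodes:  time elapse, guard intersection,
reset/deactivation with fresh variables, and renaming (canonicalization is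
semantically transparent).  `T` assigns to every variable of the node a
disjunct of the transition formula of its location on the letter `a`.  If a
chosen disjunct is `false`, the target is discarded; if all chosen disjuncts
are `true`, the successor is the special empty node. -/
def Succ (𝒜 : OneATA Q A) (Z : SemZone Q) (IA : Finset (Q × ℕ)) (a : A)
    (T : Q × ℕ → TF Q) (Z' : SemZone Q) (IA' : Finset (Q × ℕ)) : Prop :=
  (∀ y ∈ Z.vars ∪ IA, 𝒜.isTarget y.1 a (T y)) ∧
  (∀ y ∈ Z.vars ∪ IA, T y ≠ TF.ff) ∧
  ((∀ y ∈ Z.vars ∪ IA, T y = TF.tt) → (Z' = emptySemZone ∧ IA' = ∅)) ∧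
  ((¬ ∀ y ∈ Z.vars ∪ IA, T y = TF.tt) →
    IA' = succIA Z IA T ∧
    Z'.vars = succVars Z IA T ∧
    ∃ g : (Q × ℕ) → Q → ℕ,
      (∀ y ∈ Z.vars, ∀ q ∈ (T y).atomLocs, 2 ≤ g y q ∧ g y q ≤ copyCount Z T q + 1) ∧
      (∀ y₁ ∈ Z.vars, ∀ y₂ ∈ Z.vars, ∀ q, q ∈ (T y₁).atomLocs → q ∈ (T y₂).atomLocs →
        g y₁ q = g y₂ q → y₁ = y₂) ∧
      Z'.val = fun ν' => ∃ (ν : (Q × ℕ) → ℝ≥0) (d : ℝ≥0), Z.val ν ∧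
        (∀ y ∈ Z.vars, ∀ I ∈ (T y).topGuards, I.mem (ν y + d)) ∧
        (∀ y ∈ Z.vars ∪ IA, ∀ q ∈ (T y).resetLocs, ν' (q, 1) = 0) ∧
        (∀ y ∈ Z.vars, ∀ q ∈ (T y).atomLocs, ν' (q, g y q) = ν y + d))

/-- Time elapse on a single state. -/
noncomputable def stDelay (s : Q × Option ℝ≥0) (d : ℝ≥0) : Q × Option ℝ≥0 :=
  (s.1, s.2.map (· + d))

/-- `γ →^{d,a,(C₁,…,C_m)} γ'` where the disjuncts chosen in the step correspond,
via a surjection witnessing `γ ∈ ⟦(Z,IA)⟧`, to the target tuple `T` of the node. -/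
def StepMatching (𝒜 : OneATA Q A) (Z : SemZone Q) (IA : Finset (Q × ℕ))
    (γ : Config Q) (d : ℝ≥0) (a : A) (T : Q × ℕ → TF Q) (γ' : Config Q) : Prop :=
  ∃ h χ, NodeSatVia Z IA γ h ∧
    (∀ y ∈ Z.vars ∪ IA, χ (stDelay (h y) d) = T y) ∧
    𝒜.Step γ d a χ γ'

/-- Reachability in the zone graph. -/
inductive ZReach (𝒜 : OneATA Q A) :
    SemZone Q × Finset (Q × ℕ) → SemZone Q × Finset (Q × ℕ) → Prop
  | refl (n) : ZReach 𝒜 n n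
  | step {n₁ n₂ n₃} (a : A) (T) :
      ZReach 𝒜 n₁ n₂ → Succ 𝒜 n₂.1 n₂.2 a T n₃.1 n₃.2 → ZReach 𝒜 n₁ n₃

/-- A node is accepting if the locations of all its variables are accepting. -/
def AccNode (𝒜 : OneATA Q A) (Z : SemZone Q) (IA : Finset (Q × ℕ)) : Prop :=
  ∀ y ∈ Z.vars ∪ IA, y.1 ∈ 𝒜.final

/-! ### Entailment between nodes -/

/-- Node entailment `(Z,IA) ⊨_M (Z',IA')`. -/
def NodeEntails (M : ℕ) (Z : SemZone Q) (IA : Finset (Q × ℕ))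
    (Z' : SemZone Q) (IA' : Finset (Q × ℕ)) : Prop :=
  ∀ γ', NodeSat Z' IA' γ' → ∃ γ, NodeSat Z IA γ ∧ CfgEntails M γ γ'

/-- Classical region equivalence between valuations over the variable set `V`. -/
def ValRegEquiv (M : ℕ) (V : Finset (Q × ℕ)) (u u' : (Q × ℕ) → ℝ≥0) : Prop :=
  (∀ y ∈ V, ((u y ≤ (M : ℝ≥0)) ↔ (u' y ≤ (M : ℝ≥0))) ∧
    (u y ≤ (M : ℝ≥0) →
      (⌊(u y : ℝ)⌋ = ⌊(u' y : ℝ)⌋ ∧ (Int.fract (u y : ℝ) = 0 ↔ Int.fract (u' y : ℝ) = 0)))) ∧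
  (∀ y ∈ V, ∀ z ∈ V, u y ≤ (M : ℝ≥0) → u z ≤ (M : ℝ≥0) →
    (Int.fract (u y : ℝ) ≤ Int.fract (u z : ℝ) ↔
      Int.fract (u' y : ℝ) ≤ Int.fract (u' z : ℝ)))

/-- The bounded entailment check `(Z,IA) ⊨ᵇ_M (Z',IA')`, for zones over the same
variables, using the identity correspondence of variables. -/
def BoundedEntails (M : ℕ) (Z : SemZone Q) (IA : Finset (Q × ℕ))
    (Z' : SemZone Q) (IA' : Finset (Q × ℕ)) : Prop :=
  IA ⊆ IA' ∧ ∀ u', Z'.val u' → ∃ u, Z.val u ∧ ValRegEquiv M Z.vars u u'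

/-! ### Syntactic zones -/

/-- Comparison relations in zone constraints. -/
inductive ZRel | lt | le | gt | ge

def ZRel.holds : ZRel → ℝ → ℝ → Prop
  | .lt, x, y => x < y
  | .le, x, y => x ≤ y
  | .gt, x, y => x > y
  | .ge, x, y => x ≥ y

/-- A zone constraint: `y ∼ k` or `y − x ∼ k` with `k ∈ ℤ`. -/
inductive ZConstr (Q : Type*) where
  | single (y : Q × ℕ) (r : ZRel) (k : ℤ)
  | diff (y x : Q × ℕ) (r : ZRel) (k : ℤ)

def ZConstr.holds (ν : (Q × ℕ) → ℝ≥0) : ZConstr Q → Prop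
  | .single y r k => r.holds (ν y : ℝ) (k : ℝ)
  | .diff y x r k => r.holds ((ν y : ℝ) - (ν x : ℝ)) (k : ℝ)

/-- The variables occurring in a constraint. -/
def ZConstr.varsIn : ZConstr Q → List (Q × ℕ)
  | .single y _ _ => [y]
  | .diff y x _ _ => [y, x]

/-- A (syntactic) zone: a finite set of variables and a finite conjunction of
constraints. -/
structure Zone (Q : Type*) where
  vars : Finset (Q × ℕ)
  constrs : List (ZConstr Q)

def Zone.satBy (Z : Zone Q) (ν : (Q × ℕ) → ℝ≥0) : Prop :=
  ∀ c ∈ Z.constrs, c.holds ν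

/-- Constraints only mention variables of the zone. -/
def Zone.wf (Z : Zone Q) : Prop :=
  ∀ c ∈ Z.constrs, ∀ v ∈ c.varsIn, v ∈ Z.vars

/-- The semantic zone of a syntactic zone. -/
def Zone.toSem (Z : Zone Q) : SemZone Q := ⟨Z.vars, Z.satBy⟩

/-! ### The `N'_r` sets for the entailment check -/

/-- Location preserving one-to-one mapping from `Var(Z)` to `Var(Z')`. -/
def LocPresInj (Z Z' : Zone Q) (r : Q × ℕ → Q × ℕ) : Prop :=
  Set.InjOn r ↑Z.vars ∧ (∀ y ∈ Z.vars, r y ∈ Z'.vars) ∧ ∀ y ∈ Z.vars, (r y).1 = y.1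

/-- `γ' ∈ N'_r` : `γ'` satisfies `(Z', IA')` via a surjection whose induced
valuation, transported back along `r`, is region equivalent to no valuation
satisfying `Z`. -/
def InNr (M : ℕ) (Z Z' : Zone Q) (IA' : Finset (Q × ℕ))
    (r : Q × ℕ → Q × ℕ) (γ' : Config Q) : Prop :=
  ∃ (h' : Q × ℕ → Q × Option ℝ≥0) (ν' : (Q × ℕ) → ℝ≥0),
    (∀ y ∈ Z'.vars ∪ IA', (h' y).1 = y.1) ∧
    (∀ y ∈ Z'.vars ∪ IA', h' y ∈ γ') ∧
    (∀ s ∈ γ', ∃ y ∈ Z'.vars ∪ IA', h' y = s) ∧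
    (∀ y ∈ IA', (h' y).2 = none) ∧
    (∀ y ∈ Z'.vars, (h' y).2 = some (ν' y)) ∧
    Z'.satBy ν' ∧
    ∀ ν, Z.satBy ν → ¬ ValRegEquiv M Z.vars ν (fun y => ν' (r y))

end ZoneDefs


/-! ## The zones `Z_φ` and `Z'_φ` constructed from a monotone 3-CNF formula -/

/-- The two locations `q_x` and `q_y`. -/
inductive XY | qx | qy
deriving DecidableEq

/-- The zone variables used in the reduction, for a formula with `m` clauses:
`px_j, py_j, nx_j, ny_j` (dummy clauses), `x^i_j, y^i_j` (clause literals) for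
`Z'_φ`, and `x⁺_j, y⁺_j, x⁻_j, y⁻_j` for `Z_φ`. -/
inductive MVar (m : ℕ) where
  | px (j : Fin 3)
  | py (j : Fin 3)
  | nx (j : Fin 3)
  | ny (j : Fin 3)
  | xc (i : Fin m) (j : Fin 3)
  | yc (i : Fin m) (j : Fin 3)
  | xp (j : Fin 3)
  | yp (j : Fin 3)
  | xm (j : Fin 3)
  | ym (j : Fin 3)
deriving DecidableEq

section Mono

variable {m : ℕ}

/-- The location of each variable. -/
def MVar.loc : MVar m → XY
  | .px _ | .nx _ | .xc _ _ | .xp _ | .xm _ => .qx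
  | .py _ | .ny _ | .yc _ _ | .yp _ | .ym _ => .qy

def MVar.inZ : MVar m → Prop
  | .xp _ | .yp _ | .xm _ | .ym _ => True
  | _ => False

/-- The variables of `Z_φ`. -/
def ZVars (m : ℕ) : Set (MVar m) := {y | y.inZ}

/-- The variables of `Z'_φ`. -/
def Z'Vars (m : ℕ) : Set (MVar m) := {y | ¬ y.inZ}

/-- `γ` satisfies the node `(Z, ∅)` (zone given semantically by the predicate
`P` on valuations, over the variable set `V`) via the surjection `h`. -/
def MSat (V : Set (MVar m)) (P : (MVar m → ℝ≥0) → Prop) (γ : Config XY)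
    (h : MVar m → XY × Option ℝ≥0) : Prop :=
  (∀ y ∈ V, (h y).1 = y.loc) ∧
  (∀ y ∈ V, h y ∈ γ) ∧
  (∀ s ∈ γ, ∃ y ∈ V, h y = s) ∧
  ∃ ν : MVar m → ℝ≥0, (∀ y ∈ V, (h y).2 = some (ν y)) ∧ P ν

/-- The constraints of the zone `Z_φ` (with `k` positive clauses and `m`
clauses in total). -/
def ZphiSat (m k : ℕ) (ν : MVar m → ℝ≥0) : Prop :=
  (∀ j : Fin 3, 0 ≤ (ν (.yp j) : ℝ) - ν (.xp j) ∧ (ν (.yp j) : ℝ) - ν (.xp j) ≤ 1) ∧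
  (∀ j : Fin 3, 1 < (ν (.ym j) : ℝ) - ν (.xm j) ∧ (ν (.ym j) : ℝ) - ν (.xm j) ≤ 2) ∧
  (∀ j : Fin 2, 1 ≤ (ν (.xp j.succ) : ℝ) - ν (.yp j.castSucc) ∧
      (ν (.xp j.succ) : ℝ) - ν (.yp j.castSucc) ≤ 5) ∧
  (∀ j : Fin 2, 1 ≤ (ν (.xm j.succ) : ℝ) - ν (.ym j.castSucc) ∧
      (ν (.xm j.succ) : ℝ) - ν (.ym j.castSucc) ≤ 5) ∧
  ((ν (.yp 2) : ℝ) < 14 * ((k : ℝ) + 1) - 2) ∧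
  ((ν (.xm 0) : ℝ) > 14 * ((k : ℝ) + 1) - 2) ∧
  ((ν (.ym 2) : ℝ) - ν (.xp 0) < 14 * ((m : ℝ) + 2) - 6)

/-- The constraints of the zone `Z'_φ`, for a monotone 3-CNF formula whose
`i`-th clause has literals on the propositional variables `lits i 0`,
`lits i 1`, `lits i 2`. -/
def Z'phiSat (m : ℕ) {PV : Type*} (lits : Fin m → Fin 3 → PV)
    (ν : MVar m → ℝ≥0) : Prop :=
  (∀ j : Fin 3, (ν (.px j) : ℝ) = 3 * (j : ℕ) ∧ (ν (.py j) : ℝ) = 3 * (j : ℕ)) ∧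
  (∀ j : Fin 3, (ν (.nx j) : ℝ) = 14 * ((m : ℝ) + 1) + 3 * (j : ℕ) ∧
      (ν (.ny j) : ℝ) = 14 * ((m : ℝ) + 1) + 3 * (j : ℕ) + 2) ∧
  (∀ (i : Fin m) (j : Fin 3),
      14 * ((i : ℕ) + 1 : ℝ) + 3 * (j : ℕ) ≤ (ν (.xc i j) : ℝ) ∧
      (ν (.xc i j) : ℝ) ≤ 14 * ((i : ℕ) + 1 : ℝ) + 3 * (j : ℕ) + 2 ∧
      14 * ((i : ℕ) + 1 : ℝ) + 3 * (j : ℕ) ≤ (ν (.yc i j) : ℝ) ∧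
      (ν (.yc i j) : ℝ) ≤ 14 * ((i : ℕ) + 1 : ℝ) + 3 * (j : ℕ) + 2 ∧
      (ν (.xc i j) : ℝ) ≤ (ν (.yc i j) : ℝ)) ∧
  (∀ (i i' : Fin m) (j j' : Fin 3), lits i j = lits i' j' →
      (ν (.xc i' j') : ℝ) - ν (.xc i j) = 14 * (((i' : ℕ) : ℝ) - ((i : ℕ) : ℝ)) +
        3 * (((j' : ℕ) : ℝ) - ((j : ℕ) : ℝ)) ∧
      (ν (.yc i' j') : ℝ) - ν (.yc i j) = 14 * (((i' : ℕ) : ℝ) - ((i : ℕ) : ℝ)) +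
        3 * (((j' : ℕ) : ℝ) - ((j : ℕ) : ℝ)))

/-- The (real) value of a state of a configuration. -/
noncomputable def sval (s : XY × Option ℝ≥0) : ℝ := ((s.2.getD 0 : ℝ≥0) : ℝ)

/-- The assignment `α_{γ'}` extracted from a surjection `h'` witnessing that a
configuration satisfies `(Z'_φ, ∅)`: a propositional variable is true iff the
difference `y − x` of (one of) its literal occurrences exceeds 1. -/
def alphaOf {PV : Type*} (lits : Fin m → Fin 3 → PV)
    (h' : MVar m → XY × Option ℝ≥0) (p : PV) : Prop :=
  ∃ (i : Fin m) (j : Fin 3), lits i j = p ∧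
    1 < sval (h' (.yc i j)) - sval (h' (.xc i j))

/-- The assignment `α` falsifies clause `C_i` (clauses `C_1, …, C_k` are
positive, the rest negative): all of its literals are false. -/
def Falsifies {PV : Type*} (k : ℕ) (lits : Fin m → Fin 3 → PV)
    (α : PV → Prop) (i : Fin m) : Prop :=
  if (i : ℕ) < k then ∀ j : Fin 3, ¬ α (lits i j) else ∀ j : Fin 3, α (lits i j)

/-- The monotone 3-CNF formula is satisfiable. -/
def MonoSatisfiable {PV : Type*} (k : ℕ) (lits : Fin m → Fin 3 → PV) : Prop :=
  ∃ α : PV → Prop, ∀ i : Fin m, ¬ Falsifies k lits α i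

end Mono



set_option linter.unusedSectionVars false

/-! ## Auxiliary development for Statement 2 -/

section WidthAux

open Finset

variable {Q : Type*}

/-- The atom states of a transition formula, with values determined by
reset/deactivation context. -/
def TF.atomStates : TF Q → Option ℝ≥0 → Set (Q × Option ℝ≥0)
  | .loc q, v => {(q, v)}
  | .and φ ψ, v => φ.atomStates v ∪ ψ.atomStates v
  | .or φ ψ, v => φ.atomStates v ∪ ψ.atomStates v
  | .reset φ, _ => φ.atomStates (some 0)
  | .deact φ, _ => φ.atomStates none
  | .tt, _ => ∅
  | .ff, _ => ∅
  | .guard _, _ => ∅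

/-- Satisfaction is monotone in the model. -/
lemma TF.sat_mono {M M' : Config Q} (hMM : M ⊆ M') :
    ∀ (φ : TF Q) (v), φ.sat M v → φ.sat M' v := by
  intro φ
  induction φ with
  | tt => intro v _; trivial
  | ff => intro v h; exact h
  | loc q => intro v h; exact hMM h
  | guard I => intro v h; exact h
  | and φ ψ ihφ ihψ => intro v h; exact ⟨ihφ v h.1, ihψ v h.2⟩
  | or φ ψ ihφ ihψ =>
      intro v h
      exact h.elim (fun h => Or.inl (ihφ v h)) (fun h => Or.inr (ihψ v h))
  | reset φ ih => intro v h; exact ih _ h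
  | deact φ ih => intro v h; exact ih _ h

/-- Restricting a model to the atom states preserves satisfaction. -/
lemma TF.sat_filter {M : Config Q} :
    ∀ (φ : TF Q) (v), φ.sat M v →
      φ.sat (M.filter (fun s => s ∈ φ.atomStates v)) v := by
  intro φ
  induction φ with
  | tt => intro v _; trivial
  | ff => intro v h; exact h
  | loc q =>
      intro v h
      simp only [TF.sat, TF.atomStates, Finset.mem_filter]
      exact (@Finset.mem_filter _ _ (fun _ => Classical.propDecidable _) M (q, v)).2 ⟨h, rfl⟩
  | guard I => intro v h; exact h
  | and φ ψ ihφ ihψ =>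
      intro v h
      have h1 : M.filter (fun s => s ∈ φ.atomStates v) ⊆
          M.filter (fun s => s ∈ (TF.and φ ψ).atomStates v) := by
        intro s hs
        simp only [Finset.mem_filter] at hs ⊢
        exact ⟨hs.1, Or.inl hs.2⟩
      have h2 : M.filter (fun s => s ∈ ψ.atomStates v) ⊆
          M.filter (fun s => s ∈ (TF.and φ ψ).atomStates v) := by
        intro s hs
        simp only [Finset.mem_filter] at hs ⊢
        exact ⟨hs.1, Or.inr hs.2⟩
      exact ⟨TF.sat_mono h1 φ v (ihφ v h.1), TF.sat_mono h2 ψ v (ihψ v h.2)⟩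
  | or φ ψ ihφ ihψ =>
      intro v h
      have h1 : M.filter (fun s => s ∈ φ.atomStates v) ⊆
          M.filter (fun s => s ∈ (TF.or φ ψ).atomStates v) := by
        intro s hs
        simp only [Finset.mem_filter] at hs ⊢
        exact ⟨hs.1, Or.inl hs.2⟩
      have h2 : M.filter (fun s => s ∈ ψ.atomStates v) ⊆
          M.filter (fun s => s ∈ (TF.or φ ψ).atomStates v) := by
        intro s hs
        simp only [Finset.mem_filter] at hs ⊢
        exact ⟨hs.1, Or.inr hs.2⟩
      rcases h with h | h
      · exact Or.inl (TF.sat_mono h1 φ v (ihφ v h))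
      · exact Or.inr (TF.sat_mono h2 ψ v (ihψ v h))
  | reset φ ih => intro v h; exact ih (some 0) h
  | deact φ ih => intro v h; exact ih none h

/-- A minimal model consists only of atom states of the formula. -/
lemma MinModel.subset_atomStates {M : Config Q} {v : Option ℝ≥0} {φ : TF Q}
    (h : MinModel M v φ) : ∀ s ∈ M, s ∈ φ.atomStates v := by
  intro s hs
  by_contra hnot
  have hsub : M.filter (fun s => s ∈ φ.atomStates v) ⊆ M := Finset.filter_subset _ _
  have hss : M.filter (fun s => s ∈ φ.atomStates v) ⊂ M := by
    refine ⟨hsub, fun hMs => ?_⟩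
    have := (Finset.mem_filter.1 (hMs hs)).2
    exact hnot this
  exact h.2 _ hss (TF.sat_filter φ v h.1)

end WidthAux

section WidthAux2

open Finset

variable {Q : Type*}

/-- Total weight of the active states of a configuration. -/
noncomputable def actW (w : Q → ℕ) (M : Config Q) : ℕ :=
  ∑ s ∈ M.filter (fun s => s.2 ≠ none), w s.1

/-- A syntactic bound on the weight of active states of any minimal model of a
transition formula, by activity mode of the current clock value. -/
def TF.wBound (w : Q → ℕ) : TF Q → Bool → ℕ
  | .loc q, b => if b then w q else 0
  | .and φ ψ, b => φ.wBound w b + ψ.wBound w b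
  | .or φ ψ, b => max (φ.wBound w b) (ψ.wBound w b)
  | .reset φ, _ => φ.wBound w true
  | .deact φ, _ => φ.wBound w false
  | .tt, _ => 0
  | .ff, _ => 0
  | .guard _, _ => 0

lemma actW_mono (w : Q → ℕ) {M M' : Config Q} (h : M ⊆ M') :
    actW w M ≤ actW w M' :=
  Finset.sum_le_sum_of_subset (Finset.filter_subset_filter _ h)

lemma actW_union_le [DecidableEq (Q × Option ℝ≥0)] (w : Q → ℕ) (M M' : Config Q) :
    actW w (M ∪ M') ≤ actW w M + actW w M' := by
  unfold actW
  rw [Finset.filter_union]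
  calc ∑ s ∈ M.filter (fun s => s.2 ≠ none) ∪ M'.filter (fun s => s.2 ≠ none), w s.1
      ≤ (∑ s ∈ M.filter (fun s => s.2 ≠ none) ∪ M'.filter (fun s => s.2 ≠ none), w s.1)
        + ∑ s ∈ M.filter (fun s => s.2 ≠ none) ∩ M'.filter (fun s => s.2 ≠ none), w s.1 :=
        Nat.le_add_right _ _
    _ = _ := Finset.sum_union_inter

lemma actW_empty (w : Q → ℕ) : actW w (∅ : Config Q) = 0 := by
  unfold actW; rw [Finset.filter_empty, Finset.sum_empty]

lemma actW_biUnion_le [DecidableEq (Q × Option ℝ≥0)] (w : Q → ℕ)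
    (γ : Config Q) (Mo : Q × Option ℝ≥0 → Config Q) :
    actW w (γ.biUnion Mo) ≤ ∑ s ∈ γ, actW w (Mo s) := by
  classical
  induction γ using Finset.induction_on with
  | empty => simp [actW_empty]
  | insert a s hnot ih =>
      rw [Finset.biUnion_insert, Finset.sum_insert hnot]
      exact le_trans (actW_union_le w _ _) (Nat.add_le_add_left ih _)

/-- Every satisfiable formula has a small model inside any given model. -/
lemma TF.exists_small_model (w : Q → ℕ) {M : Config Q} :
    ∀ (φ : TF Q) (v : Option ℝ≥0), φ.sat M v →
      ∃ M' : Config Q, M' ⊆ M ∧ φ.sat M' v ∧ actW w M' ≤ φ.wBound w v.isSome := by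
  intro φ
  induction φ with
  | tt =>
      intro v _
      exact ⟨∅, Finset.empty_subset _, trivial, by simp [actW_empty, TF.wBound]⟩
  | ff => intro v h; exact h.elim
  | loc q =>
      intro v h
      refine ⟨{(q, v)}, Finset.singleton_subset_iff.2 h,
        Finset.mem_singleton_self _, ?_⟩
      cases v with
      | none => simp only [actW, TF.wBound, Finset.filter_singleton, ne_eq, not_true_eq_false, ↓reduceIte, Finset.sum_empty, Option.isSome_none, Bool.false_eq_true, le_refl]
      | some r =>
          refine le_trans (Finset.sum_le_sum_of_subset (Finset.filter_subset _ _)) ?_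
          simp [TF.wBound, Option.isSome]
  | guard I =>
      intro v h
      exact ⟨∅, Finset.empty_subset _, h, by simp [actW_empty, TF.wBound]⟩
  | and φ ψ ihφ ihψ =>
      intro v h
      obtain ⟨M₁, hM₁, hs₁, hw₁⟩ := ihφ v h.1
      obtain ⟨M₂, hM₂, hs₂, hw₂⟩ := ihψ v h.2
      refine ⟨M₁ ∪ M₂, Finset.union_subset hM₁ hM₂,
        ⟨TF.sat_mono Finset.subset_union_left φ v hs₁,
         TF.sat_mono Finset.subset_union_right ψ v hs₂⟩, ?_⟩
      exact le_trans (actW_union_le w M₁ M₂) (Nat.add_le_add hw₁ hw₂)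
  | or φ ψ ihφ ihψ =>
      intro v h
      rcases h with h | h
      · obtain ⟨M₁, hM₁, hs₁, hw₁⟩ := ihφ v h
        exact ⟨M₁, hM₁, Or.inl hs₁, le_trans hw₁ (le_max_left _ _)⟩
      · obtain ⟨M₂, hM₂, hs₂, hw₂⟩ := ihψ v h
        exact ⟨M₂, hM₂, Or.inr hs₂, le_trans hw₂ (le_max_right _ _)⟩
  | reset φ ih =>
      intro v h
      obtain ⟨M', h1, h2, h3⟩ := ih (some 0) h
      exact ⟨M', h1, h2, h3⟩
  | deact φ ih =>
      intro v h
      obtain ⟨M', h1, h2, h3⟩ := ih none h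
      exact ⟨M', h1, h2, h3⟩

/-- The active weight of a minimal model is bounded by the syntactic bound. -/
lemma MinModel.actW_le (w : Q → ℕ) {M : Config Q} {v : Option ℝ≥0} {φ : TF Q}
    (h : MinModel M v φ) : actW w M ≤ φ.wBound w v.isSome := by
  obtain ⟨M', hsub, hsat, hw⟩ := TF.exists_small_model w φ v h.1
  rcases eq_or_ne M' M with rfl | hne
  · exact hw
  · exact absurd hsat (h.2 M' ⟨hsub, fun hMM => hne (Finset.Subset.antisymm hsub hMM)⟩)

/-- Disjuncts have smaller weight bound and fewer atoms. -/
lemma TF.disjunct_le {φ C : TF Q} (h : C ∈ φ.disjuncts) (w : Q → ℕ) (b : Bool)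
    {v : Option ℝ≥0} :
    C.wBound w b ≤ φ.wBound w b ∧ C.atomStates v ⊆ φ.atomStates v := by
  induction φ with
  | or φ ψ ihφ ihψ =>
      rw [show (TF.or φ ψ).disjuncts = φ.disjuncts ++ ψ.disjuncts from rfl,
        List.mem_append] at h
      rcases h with h | h
      · obtain ⟨h1, h2⟩ := ihφ h
        exact ⟨le_trans h1 (le_max_left _ _), fun s hs => Or.inl (h2 hs)⟩
      · obtain ⟨h1, h2⟩ := ihψ h
        exact ⟨le_trans h1 (le_max_right _ _), fun s hs => Or.inr (h2 hs)⟩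
  | tt => simp only [TF.disjuncts, List.mem_singleton] at h; subst h; exact ⟨le_rfl, fun s hs => hs⟩
  | ff => simp only [TF.disjuncts, List.mem_singleton] at h; subst h; exact ⟨le_rfl, fun s hs => hs⟩
  | loc q => simp only [TF.disjuncts, List.mem_singleton] at h; subst h; exact ⟨le_rfl, fun s hs => hs⟩
  | guard I => simp only [TF.disjuncts, List.mem_singleton] at h; subst h; exact ⟨le_rfl, fun s hs => hs⟩
  | and φ ψ _ _ => simp only [TF.disjuncts, List.mem_singleton] at h; subst h; exact ⟨le_rfl, fun s hs => hs⟩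
  | reset φ _ => simp only [TF.disjuncts, List.mem_singleton] at h; subst h; exact ⟨le_rfl, fun s hs => hs⟩
  | deact φ _ => simp only [TF.disjuncts, List.mem_singleton] at h; subst h; exact ⟨le_rfl, fun s hs => hs⟩

end WidthAux2

section WidthMTL

open Finset

variable {A : Type*}

/-- `(active-mode weight, inactive-mode weight)` of the transition formula of a
subformula. -/
def ggp : MTL A → ℕ × ℕ
  | .atom _ => (0, 0)
  | .natom _ => (0, 0)
  | .conj φ ψ =>
      ((if φ.isPure then (ggp φ).2 else (ggp φ).1) +
        (if ψ.isPure then (ggp ψ).2 else (ggp ψ).1),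
       (ggp φ).2 + (ggp ψ).2)
  | .disj φ ψ =>
      (max (if φ.isPure then (ggp φ).2 else (ggp φ).1)
        (if ψ.isPure then (ggp ψ).2 else (ggp ψ).1),
       max (ggp φ).2 (ggp ψ).2)
  | .next _ ψ =>
      ((if ψ.isPure then (ggp ψ).2 else (ggp ψ).1),
       (if ψ.isPure then (ggp ψ).2 else (ggp ψ).1))
  | .untl _ φ ψ =>
      (max (if ψ.isPure then (ggp ψ).2 else (ggp ψ).1)
        ((if φ.isPure then (ggp φ).2 else (ggp φ).1) +
          (1 + (if ψ.isPure then (ggp ψ).2 else (ggp ψ).1))),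
       max (if ψ.isPure then (ggp ψ).2 else (ggp ψ).1)
         (if φ.isPure then (ggp φ).2 else (ggp φ).1))

/-- The weight of the transition formula of `ψ` in the mode `rhoP`/`barP`
chooses. -/
def bW (ψ : MTL A) : ℕ := if ψ.isPure then (ggp ψ).2 else (ggp ψ).1

/-- The weight of a location of `A'_φ₀`. -/
def wloc (φ₀ : MTL A) : MLoc A → ℕ
  | .start => max 1 (bW φ₀)
  | .form (.untl _ _ ψ₂) => 1 + bW ψ₂
  | .form ψ => max 1 (ggp ψ).1
  | .nextr _ ψ => bW ψ

lemma one_le_wloc_form (φ₀ : MTL A) (ψ : MTL A) : 1 ≤ wloc φ₀ (.form ψ) := by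
  cases ψ <;> simp [wloc]

lemma ggp2_of_pure : ∀ {ψ : MTL A}, ψ.isPure = true → (ggp ψ).2 = 0 := by
  intro ψ
  induction ψ with
  | atom a => intro _; rfl
  | natom a => intro _; rfl
  | conj φ ψ ihφ ihψ =>
      intro h
      simp only [MTL.isPure, Bool.and_eq_true] at h
      simp [ggp, ihφ h.1, ihψ h.2]
  | disj φ ψ ihφ ihψ =>
      intro h
      simp only [MTL.isPure, Bool.and_eq_true] at h
      simp [ggp, ihφ h.1, ihψ h.2]
  | next I ψ ih =>
      intro h
      simp only [MTL.isPure, Bool.and_eq_true] at h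
      simp [ggp, h.2, ih h.2]
  | untl I φ ψ ihφ ihψ =>
      intro h
      simp only [MTL.isPure, Bool.and_eq_true] at h
      simp [ggp, h.1.2, h.2, ihφ h.1.2, ihψ h.2]

lemma bW_of_pure {ψ : MTL A} (h : ψ.isPure = true) : bW ψ = 0 := by
  simp [bW, h, ggp2_of_pure h]

/-! ### Subformula lemmas -/

lemma MTL.mem_subfs_self (ψ : MTL A) : ψ ∈ ψ.subfs := by
  cases ψ <;> simp [MTL.subfs]

lemma MTL.subfs_trans : ∀ {χ ψ θ : MTL A}, θ ∈ ψ.subfs → ψ ∈ χ.subfs → θ ∈ χ.subfs := by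
  intro χ
  induction χ with
  | atom a =>
      intro ψ θ h1 h2
      simp only [MTL.subfs, List.mem_singleton] at h2
      subst h2; exact h1
  | natom a =>
      intro ψ θ h1 h2
      simp only [MTL.subfs, List.mem_singleton] at h2
      subst h2; exact h1
  | conj φ ψ' ihφ ihψ =>
      intro ψ θ h1 h2
      simp only [MTL.subfs, List.mem_cons, List.mem_append] at h2 ⊢
      rcases h2 with rfl | h2 | h2
      · simpa [MTL.subfs] using h1
      · exact Or.inr (Or.inl (ihφ h1 h2))
      · exact Or.inr (Or.inr (ihψ h1 h2))
  | disj φ ψ' ihφ ihψ =>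
      intro ψ θ h1 h2
      simp only [MTL.subfs, List.mem_cons, List.mem_append] at h2 ⊢
      rcases h2 with rfl | h2 | h2
      · simpa [MTL.subfs] using h1
      · exact Or.inr (Or.inl (ihφ h1 h2))
      · exact Or.inr (Or.inr (ihψ h1 h2))
  | next I ψ' ih =>
      intro ψ θ h1 h2
      simp only [MTL.subfs, List.mem_cons] at h2 ⊢
      rcases h2 with rfl | h2
      · simpa [MTL.subfs] using h1
      · exact Or.inr (ih h1 h2)
  | untl I φ ψ' ihφ ihψ =>
      intro ψ θ h1 h2
      simp only [MTL.subfs, List.mem_cons, List.mem_append] at h2 ⊢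
      rcases h2 with rfl | h2 | h2
      · simpa [MTL.subfs] using h1
      · exact Or.inr (Or.inl (ihφ h1 h2))
      · exact Or.inr (Or.inr (ihψ h1 h2))

lemma MTL.isPure_of_mem_subfs : ∀ {χ ψ : MTL A},
    χ.isPure = true → ψ ∈ χ.subfs → ψ.isPure = true := by
  intro χ
  induction χ with
  | atom a => intro ψ h1 h2; simp only [MTL.subfs, List.mem_singleton] at h2; subst h2; exact h1
  | natom a => intro ψ h1 h2; simp only [MTL.subfs, List.mem_singleton] at h2; subst h2; exact h1
  | conj φ χ' ihφ ihψ =>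
      intro ψ h1 h2
      simp only [MTL.isPure, Bool.and_eq_true] at h1
      simp only [MTL.subfs, List.mem_cons, List.mem_append] at h2
      rcases h2 with rfl | h2 | h2
      · simp [MTL.isPure, h1.1, h1.2]
      · exact ihφ h1.1 h2
      · exact ihψ h1.2 h2
  | disj φ χ' ihφ ihψ =>
      intro ψ h1 h2
      simp only [MTL.isPure, Bool.and_eq_true] at h1
      simp only [MTL.subfs, List.mem_cons, List.mem_append] at h2
      rcases h2 with rfl | h2 | h2
      · simp [MTL.isPure, h1.1, h1.2]
      · exact ihφ h1.1 h2
      · exact ihψ h1.2 h2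
  | next I χ' ih =>
      intro ψ h1 h2
      simp only [MTL.isPure, Bool.and_eq_true] at h1
      simp only [MTL.subfs, List.mem_cons] at h2
      rcases h2 with rfl | h2
      · simp [MTL.isPure, h1.1, h1.2]
      · exact ih h1.2 h2
  | untl I φ χ' ihφ ihψ =>
      intro ψ h1 h2
      simp only [MTL.isPure, Bool.and_eq_true] at h1
      simp only [MTL.subfs, List.mem_cons, List.mem_append] at h2
      rcases h2 with rfl | h2 | h2
      · simp [MTL.isPure, h1.1.1, h1.1.2, h1.2]
      · exact ihφ h1.1.2 h2
      · exact ihψ h1.2 h2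

lemma MTL.oneSided_of_pure : ∀ {χ : MTL A}, χ.isPure = true → χ.oneSided := by
  intro χ
  induction χ with
  | atom a => intro _; trivial
  | natom a => intro _; trivial
  | conj φ ψ ihφ ihψ =>
      intro h
      simp only [MTL.isPure, Bool.and_eq_true] at h
      exact ⟨ihφ h.1, ihψ h.2⟩
  | disj φ ψ ihφ ihψ =>
      intro h
      simp only [MTL.isPure, Bool.and_eq_true] at h
      exact ⟨ihφ h.1, ihψ h.2⟩
  | next I ψ ih =>
      intro h
      simp only [MTL.isPure, Bool.and_eq_true] at h
      exact ih h.2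
  | untl I φ ψ ihφ ihψ =>
      intro h
      simp only [MTL.isPure, Bool.and_eq_true] at h
      exact ⟨h.1.2, ihψ h.2⟩

lemma MTL.oneSided_of_mem_subfs : ∀ {χ ψ : MTL A},
    χ.oneSided → ψ ∈ χ.subfs → ψ.oneSided := by
  intro χ
  induction χ with
  | atom a => intro ψ h1 h2; simp only [MTL.subfs, List.mem_singleton] at h2; subst h2; exact h1
  | natom a => intro ψ h1 h2; simp only [MTL.subfs, List.mem_singleton] at h2; subst h2; exact h1
  | conj φ χ' ihφ ihψ =>
      intro ψ h1 h2
      simp only [MTL.subfs, List.mem_cons, List.mem_append] at h2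
      rcases h2 with rfl | h2 | h2
      · exact h1
      · exact ihφ h1.1 h2
      · exact ihψ h1.2 h2
  | disj φ χ' ihφ ihψ =>
      intro ψ h1 h2
      simp only [MTL.subfs, List.mem_cons, List.mem_append] at h2
      rcases h2 with rfl | h2 | h2
      · exact h1
      · exact ihφ h1.1 h2
      · exact ihψ h1.2 h2
  | next I χ' ih =>
      intro ψ h1 h2
      simp only [MTL.subfs, List.mem_cons] at h2
      rcases h2 with rfl | h2
      · exact h1
      · exact ih h1 h2
  | untl I φ χ' ihφ ihψ =>
      intro ψ h1 h2
      simp only [MTL.subfs, List.mem_cons, List.mem_append] at h2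
      rcases h2 with rfl | h2 | h2
      · exact h1
      · exact MTL.oneSided_of_pure (MTL.isPure_of_mem_subfs h1.1 h2)
      · exact ihψ h1.2 h2

end WidthMTL

section WidthCls

open Finset

variable {A : Type*} [DecidableEq A]

/-- Classification of the atom states of `dform ψ a` at mode `v`. -/
def ClsP (ψ : MTL A) (v : Option ℝ≥0) (s : MLoc A × Option ℝ≥0) : Prop :=
  (∃ I θ, MTL.next I θ ∈ ψ.subfs ∧ s = (MLoc.nextr I θ, some 0)) ∨
  (∃ u, u ∈ ψ.subfs ∧ s.1 = MLoc.form u ∧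
    (s.2 = some 0 ∨ (s.2 = none ∧ u.isPure = true) ∨ s.2 = v))

lemma ClsP.mono {ψ χ : MTL A} {v s} (hsub : ∀ x ∈ ψ.subfs, x ∈ χ.subfs) :
    ClsP ψ v s → ClsP χ v s := by
  rintro (⟨I, θ, h1, h2⟩ | ⟨u, h1, h2, h3⟩)
  · exact Or.inl ⟨I, θ, hsub _ h1, h2⟩
  · exact Or.inr ⟨u, hsub _ h1, h2, h3⟩

lemma ClsP.of_none {ψ : MTL A} {v s} (hpure : ψ.isPure = true) :
    ClsP ψ none s → ClsP ψ v s := by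
  rintro (⟨I, θ, h1, h2⟩ | ⟨u, h1, h2, h3⟩)
  · exact Or.inl ⟨I, θ, h1, h2⟩
  · refine Or.inr ⟨u, h1, h2, ?_⟩
    rcases h3 with h3 | h3 | h3
    · exact Or.inl h3
    · exact Or.inr (Or.inl h3)
    · exact Or.inr (Or.inl ⟨h3, MTL.isPure_of_mem_subfs hpure h1⟩)

lemma ClsP.of_zero {ψ : MTL A} {v s} :
    ClsP ψ (some 0) s → ClsP ψ v s := by
  rintro (⟨I, θ, h1, h2⟩ | ⟨u, h1, h2, h3⟩)
  · exact Or.inl ⟨I, θ, h1, h2⟩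
  · refine Or.inr ⟨u, h1, h2, ?_⟩
    rcases h3 with h3 | h3 | h3
    · exact Or.inl h3
    · exact Or.inr (Or.inl h3)
    · exact Or.inl h3

lemma mem_atomStates_barP {θ : MTL A} {X : TF (MLoc A)} {v s}
    (h : s ∈ (barP θ X).atomStates v) :
    (θ.isPure = true ∧ s ∈ X.atomStates none) ∨ s ∈ X.atomStates v := by
  unfold barP at h
  split at h
  · exact Or.inl ⟨by assumption, h⟩
  · exact Or.inr h

lemma mem_atomStates_rhoP {θ : MTL A} {X : TF (MLoc A)} {v s}
    (h : s ∈ (rhoP θ X).atomStates v) :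
    (θ.isPure = true ∧ s ∈ X.atomStates none) ∨ s ∈ X.atomStates (some 0) := by
  unfold rhoP at h
  split at h
  · exact Or.inl ⟨by assumption, h⟩
  · exact Or.inr h

/-- Classification of atoms of `dform`. -/
lemma cls (a : A) : ∀ (ψ : MTL A) (v : Option ℝ≥0) (s : MLoc A × Option ℝ≥0),
    s ∈ (dform ψ a).atomStates v → ClsP ψ v s := by
  intro ψ
  induction ψ with
  | atom b =>
      intro v s hs
      rw [show dform (MTL.atom b) a = if b = a then TF.tt else TF.ff from rfl] at hs
      split at hs <;> exact absurd hs (Set.notMem_empty s)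
  | natom b =>
      intro v s hs
      rw [show dform (MTL.natom b) a = if b = a then TF.ff else TF.tt from rfl] at hs
      split at hs <;> exact absurd hs (Set.notMem_empty s)
  | conj φ ψ ihφ ihψ =>
      intro v s hs
      have hsubφ : ∀ x ∈ φ.subfs, x ∈ (MTL.conj φ ψ).subfs := by
        intro x hx; simp only [MTL.subfs, List.mem_cons, List.mem_append]; tauto
      have hsubψ : ∀ x ∈ ψ.subfs, x ∈ (MTL.conj φ ψ).subfs := by
        intro x hx; simp only [MTL.subfs, List.mem_cons, List.mem_append]; tauto
      rcases hs with hs | hs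
      · rcases mem_atomStates_barP hs with ⟨hp, hs⟩ | hs
        · exact ((ihφ none s hs).of_none hp).mono hsubφ
        · exact (ihφ v s hs).mono hsubφ
      · rcases mem_atomStates_barP hs with ⟨hp, hs⟩ | hs
        · exact ((ihψ none s hs).of_none hp).mono hsubψ
        · exact (ihψ v s hs).mono hsubψ
  | disj φ ψ ihφ ihψ =>
      intro v s hs
      have hsubφ : ∀ x ∈ φ.subfs, x ∈ (MTL.disj φ ψ).subfs := by
        intro x hx; simp only [MTL.subfs, List.mem_cons, List.mem_append]; tauto
      have hsubψ : ∀ x ∈ ψ.subfs, x ∈ (MTL.disj φ ψ).subfs := by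
        intro x hx; simp only [MTL.subfs, List.mem_cons, List.mem_append]; tauto
      rcases hs with hs | hs
      · rcases mem_atomStates_barP hs with ⟨hp, hs⟩ | hs
        · exact ((ihφ none s hs).of_none hp).mono hsubφ
        · exact (ihφ v s hs).mono hsubφ
      · rcases mem_atomStates_barP hs with ⟨hp, hs⟩ | hs
        · exact ((ihψ none s hs).of_none hp).mono hsubψ
        · exact (ihψ v s hs).mono hsubψ
  | next I ψ ih =>
      intro v s hs
      have : s = (MLoc.nextr I ψ, some 0) := hs
      exact Or.inl ⟨I, ψ, MTL.mem_subfs_self _, this⟩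
  | untl I φ ψ ihφ ihψ =>
      intro v s hs
      have hsubφ : ∀ x ∈ φ.subfs, x ∈ (MTL.untl I φ ψ).subfs := by
        intro x hx; simp only [MTL.subfs, List.mem_cons, List.mem_append]; tauto
      have hsubψ : ∀ x ∈ ψ.subfs, x ∈ (MTL.untl I φ ψ).subfs := by
        intro x hx; simp only [MTL.subfs, List.mem_cons, List.mem_append]; tauto
      rcases hs with (hs | hs) | (hs | hs)
      · rcases mem_atomStates_rhoP hs with ⟨hp, hs⟩ | hs
        · exact ((ihψ none s hs).of_none hp).mono hsubψ
        · exact ((ihψ (some 0) s hs).of_zero).mono hsubψ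
      · exact absurd hs (Set.notMem_empty s)
      · rcases mem_atomStates_rhoP hs with ⟨hp, hs⟩ | hs
        · exact ((ihφ none s hs).of_none hp).mono hsubφ
        · exact ((ihφ (some 0) s hs).of_zero).mono hsubφ
      · have : s = (MLoc.form (MTL.untl I φ ψ), v) := hs
        exact Or.inr ⟨MTL.untl I φ ψ, MTL.mem_subfs_self _, by rw [this],
          Or.inr (Or.inr (by rw [this]))⟩

end WidthCls

section WidthW

open Finset

variable {A : Type*} [DecidableEq A]

lemma wBound_barP (φ₀ : MTL A) (θ : MTL A) (X : TF (MLoc A)) (b : Bool) :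
    (barP θ X).wBound (wloc φ₀) b =
      if θ.isPure then X.wBound (wloc φ₀) false else X.wBound (wloc φ₀) b := by
  unfold barP
  split <;> simp_all [TF.wBound]

lemma wBound_rhoP (φ₀ : MTL A) (θ : MTL A) (X : TF (MLoc A)) (b : Bool) :
    (rhoP θ X).wBound (wloc φ₀) b =
      if θ.isPure then X.wBound (wloc φ₀) false else X.wBound (wloc φ₀) true := by
  unfold rhoP
  split <;> simp_all [TF.wBound]

/-- The weight bound of `dform ψ a` is exactly `ggp ψ`. -/
lemma wBound_dform (φ₀ : MTL A) :
    ∀ (ψ : MTL A) (a : A) (b : Bool),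
      (dform ψ a).wBound (wloc φ₀) b = if b then (ggp ψ).1 else (ggp ψ).2 := by
  intro ψ
  induction ψ with
  | atom c =>
      intro a b
      rw [show dform (MTL.atom c) a = if c = a then TF.tt else TF.ff from rfl]
      split <;> cases b <;> simp [TF.wBound, ggp]
  | natom c =>
      intro a b
      rw [show dform (MTL.natom c) a = if c = a then TF.ff else TF.tt from rfl]
      split <;> cases b <;> simp [TF.wBound, ggp]
  | conj φ ψ ihφ ihψ =>
      intro a b
      rw [show dform (MTL.conj φ ψ) a =
        TF.and (barP φ (dform φ a)) (barP ψ (dform ψ a)) from rfl]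
      rw [show (TF.and (barP φ (dform φ a)) (barP ψ (dform ψ a))).wBound (wloc φ₀) b =
        (barP φ (dform φ a)).wBound (wloc φ₀) b +
          (barP ψ (dform ψ a)).wBound (wloc φ₀) b from rfl]
      rw [wBound_barP, wBound_barP, ihφ, ihψ]
      by_cases hφ : φ.isPure <;> by_cases hψ : ψ.isPure <;> cases b <;>
        simp [ggp, hφ, hψ, ihφ, ihψ]
  | disj φ ψ ihφ ihψ =>
      intro a b
      rw [show dform (MTL.disj φ ψ) a =
        TF.or (barP φ (dform φ a)) (barP ψ (dform ψ a)) from rfl]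
      rw [show (TF.or (barP φ (dform φ a)) (barP ψ (dform ψ a))).wBound (wloc φ₀) b =
        max ((barP φ (dform φ a)).wBound (wloc φ₀) b)
          ((barP ψ (dform ψ a)).wBound (wloc φ₀) b) from rfl]
      rw [wBound_barP, wBound_barP, ihφ, ihψ]
      by_cases hφ : φ.isPure <;> by_cases hψ : ψ.isPure <;> cases b <;>
        simp [ggp, hφ, hψ, ihφ, ihψ]
  | next I ψ ih =>
      intro a b
      rw [show dform (MTL.next I ψ) a = TF.reset (TF.loc (MLoc.nextr I ψ)) from rfl]
      rw [show (TF.reset (TF.loc (MLoc.nextr I ψ))).wBound (wloc φ₀) b =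
        wloc φ₀ (MLoc.nextr I ψ) from rfl]
      cases b <;> simp [wloc, bW, ggp]
  | untl I φ ψ ihφ ihψ =>
      intro a b
      rw [show dform (MTL.untl I φ ψ) a =
        TF.or (TF.and (rhoP ψ (dform ψ a)) (TF.guard I))
          (TF.and (rhoP φ (dform φ a)) (TF.loc (MLoc.form (MTL.untl I φ ψ)))) from rfl]
      rw [show (TF.or (TF.and (rhoP ψ (dform ψ a)) (TF.guard I))
          (TF.and (rhoP φ (dform φ a)) (TF.loc (MLoc.form (MTL.untl I φ ψ))))).wBound
            (wloc φ₀) b =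
        max ((rhoP ψ (dform ψ a)).wBound (wloc φ₀) b + 0)
          ((rhoP φ (dform φ a)).wBound (wloc φ₀) b +
            (if b then wloc φ₀ (MLoc.form (MTL.untl I φ ψ)) else 0)) from rfl]
      rw [wBound_rhoP, wBound_rhoP, ihφ, ihψ]
      rw [show wloc φ₀ (MLoc.form (MTL.untl I φ ψ)) = 1 + bW ψ from rfl]
      by_cases hφ : φ.isPure <;> by_cases hψ : ψ.isPure <;> cases b <;>
        simp [ggp, bW, hφ, hψ, ihφ, ihψ]

end WidthW

section WidthMain

open Finset

variable {A : Type*} [DecidableEq A]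

/-- The formula attached to a location. -/
def locForm (φ₀ : MTL A) : MLoc A → MTL A
  | .start => φ₀
  | .form ψ => ψ
  | .nextr _ ψ => ψ

/-- The finite closure of locations of `A'_φ₀`. -/
def Lgood (φ₀ : MTL A) (q : MLoc A) : Prop :=
  q = .start ∨ (∃ θ ∈ φ₀.subfs, q = .form θ) ∨
    (∃ I θ, MTL.next I θ ∈ φ₀.subfs ∧ q = .nextr I θ)

lemma Lgood.subfs_sub {φ₀ : MTL A} {q : MLoc A} (h : Lgood φ₀ q) :
    ∀ x ∈ (locForm φ₀ q).subfs, x ∈ φ₀.subfs := by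
  rcases h with rfl | ⟨θ, hθ, rfl⟩ | ⟨I, θ, hθ, rfl⟩
  · intro x hx; exact hx
  · intro x hx; exact MTL.subfs_trans hx hθ
  · intro x hx
    have hθ' : θ ∈ (MTL.next I θ).subfs := by
      simp [MTL.subfs, MTL.mem_subfs_self]
    exact MTL.subfs_trans hx (MTL.subfs_trans hθ' hθ)

lemma delta_classify {φ₀ : MTL A} {q : MLoc A} {a : A} {X : TF (MLoc A)}
    (hX : mlocDelta φ₀ q a = some X) {v : Option ℝ≥0} {s : MLoc A × Option ℝ≥0}
    (hs : s ∈ X.atomStates v) : ClsP (locForm φ₀ q) v s := by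
  cases q with
  | start =>
      have hXe : X = rhoP φ₀ (dform φ₀ a) := (Option.some.inj hX).symm
      subst hXe
      rcases mem_atomStates_rhoP hs with ⟨hp, hs⟩ | hs
      · exact (cls a φ₀ none s hs).of_none hp
      · exact (cls a φ₀ (some 0) s hs).of_zero
  | form ψ =>
      have hXe : X = dform ψ a := (Option.some.inj hX).symm
      subst hXe
      exact cls a ψ v s hs
  | nextr I ψ =>
      have hXe : X = TF.and (TF.guard I) (rhoP ψ (dform ψ a)) := (Option.some.inj hX).symm
      subst hXe
      rcases hs with hs | hs
      · exact absurd hs (Set.notMem_empty s)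
      · rcases mem_atomStates_rhoP hs with ⟨hp, hs⟩ | hs
        · exact (cls a ψ none s hs).of_none hp
        · exact (cls a ψ (some 0) s hs).of_zero

lemma delta_wBound_true {φ₀ : MTL A} (hos : φ₀.oneSided) {q : MLoc A} {a : A}
    {X : TF (MLoc A)} (hq : Lgood φ₀ q) (hX : mlocDelta φ₀ q a = some X) :
    X.wBound (wloc φ₀) true ≤ wloc φ₀ q := by
  cases q with
  | start =>
      have hXe : X = rhoP φ₀ (dform φ₀ a) := (Option.some.inj hX).symm
      subst hXe
      rw [wBound_rhoP, wBound_dform, wBound_dform]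
      by_cases h : φ₀.isPure <;> simp [wloc, bW, h]
  | form ψ =>
      have hXe : X = dform ψ a := (Option.some.inj hX).symm
      subst hXe
      rw [wBound_dform]
      rcases hq with h | ⟨θ, hθ, hq⟩ | ⟨I, θ, hθ, hq⟩
      · exact absurd h (by simp)
      · have hψ : ψ ∈ φ₀.subfs := by
          cases MLoc.form.inj hq; exact hθ
        have hosψ : ψ.oneSided := MTL.oneSided_of_mem_subfs hos hψ
        cases ψ with
        | atom b => exact le_max_right _ _
        | natom b => exact le_max_right _ _
        | conj α β => exact le_max_right _ _
        | disj α β => exact le_max_right _ _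
        | next J β => exact le_max_right _ _
        | untl J θ₁ θ₂ =>
            have hp : θ₁.isPure = true := hosψ.1
            show (ggp (MTL.untl J θ₁ θ₂)).1 ≤ 1 + bW θ₂
            simp only [ggp, hp, if_pos, ggp2_of_pure hp, bW]
            omega
      · exact absurd hq (by simp)
  | nextr I ψ =>
      have hXe : X = TF.and (TF.guard I) (rhoP ψ (dform ψ a)) := (Option.some.inj hX).symm
      subst hXe
      rw [show (TF.and (TF.guard I) (rhoP ψ (dform ψ a))).wBound (wloc φ₀) true
        = 0 + (rhoP ψ (dform ψ a)).wBound (wloc φ₀) true from rfl,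
        wBound_rhoP, wBound_dform, wBound_dform]
      by_cases h : ψ.isPure <;> simp [wloc, bW, h]

lemma delta_wBound_false_of_pure {φ₀ : MTL A} {ψ : MTL A} (hp : ψ.isPure = true)
    {a : A} {X : TF (MLoc A)} (hX : mlocDelta φ₀ (MLoc.form ψ) a = some X) :
    X.wBound (wloc φ₀) false = 0 := by
  have hXe : X = dform ψ a := (Option.some.inj hX).symm
  subst hXe
  rw [wBound_dform]
  simp [ggp2_of_pure hp]

/-- The reachability invariant. -/
def Inv (φ₀ : MTL A) (γ : Config (MLoc A)) : Prop :=
  (∀ s ∈ γ, Lgood φ₀ s.1) ∧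
  (∀ q : MLoc A, (q, (none : Option ℝ≥0)) ∈ γ →
    ∃ θ : MTL A, θ.isPure = true ∧ q = MLoc.form θ) ∧
  (∃ z : ℝ≥0, ∀ (I : NInterval) (θ : MTL A) (r : ℝ≥0),
    (MLoc.nextr I θ, some r) ∈ γ → r = z) ∧
  actW (wloc φ₀) γ ≤ max 1 (bW φ₀)

end WidthMain

section WidthDelay

open Finset

variable {Q : Type*}

lemma actW_delay (w : Q → ℕ) (γ : Config Q) (d : ℝ≥0) :
    actW w (γ.delay d) = actW w γ := by
  classical
  have hinj : Function.Injective
      (fun s : Q × Option ℝ≥0 => (s.1, s.2.map (· + d))) := by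
    intro x y hxy
    simp only [Prod.mk.injEq] at hxy
    exact Prod.ext hxy.1 (Option.map_injective (add_left_injective d) hxy.2)
  unfold actW
  refine (Finset.sum_bij (fun s _ => (s.1, s.2.map (· + d))) ?_ ?_ ?_ ?_).symm
  · intro a ha
    rw [Finset.mem_filter] at ha ⊢
    constructor
    · exact Finset.mem_image_of_mem _ ha.1
    · simp only [ne_eq, Option.map_eq_none_iff]
      exact ha.2
  · intro a _ b _ hab
    exact hinj hab
  · intro b hb
    rw [Finset.mem_filter] at hb
    obtain ⟨t, ht, hteq⟩ := Finset.mem_image.1 hb.1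
    refine ⟨t, ?_, hteq⟩
    rw [Finset.mem_filter]
    refine ⟨ht, ?_⟩
    intro htnone
    apply hb.2
    rw [← hteq, htnone]
    rfl
  · intro a _
    rfl

end WidthDelay

section WidthMain2

open Finset

variable {A : Type*} [DecidableEq A]

lemma inv_init (φ₀ : MTL A) : Inv φ₀ {(MLoc.start, some 0)} := by
  refine ⟨?_, ?_, ⟨0, ?_⟩, ?_⟩
  · intro s hs
    rw [Finset.mem_singleton] at hs
    subst hs
    exact Or.inl rfl
  · intro q hq
    rw [Finset.mem_singleton] at hq
    exact absurd hq (by intro h; cases h)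
  · intro I θ r hr
    rw [Finset.mem_singleton] at hr
    exact absurd hr (by intro h; cases h)
  · refine le_trans (Finset.sum_le_sum_of_subset (Finset.filter_subset _ _)) ?_
    rw [Finset.sum_singleton]
    exact le_rfl

lemma inv_delay {φ₀ : MTL A} {γ : Config (MLoc A)} (h : Inv φ₀ γ) (d : ℝ≥0) :
    Inv φ₀ (γ.delay d) := by
  obtain ⟨hL, hNone, ⟨z, hz⟩, hW⟩ := h
  refine ⟨?_, ?_, ⟨z + d, ?_⟩, ?_⟩
  · intro s hs
    obtain ⟨t, ht, rfl⟩ := Finset.mem_image.1 hs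
    exact hL t ht
  · intro q hq
    obtain ⟨t, ht, heq⟩ := Finset.mem_image.1 hq
    have h1 : t.1 = q := congrArg Prod.fst heq
    have h2 : t.2.map (· + d) = none := congrArg Prod.snd heq
    have h3 : t.2 = none := Option.map_eq_none_iff.1 h2
    have : (q, (none : Option ℝ≥0)) ∈ γ := by
      rw [← h1, ← h3]
      exact ht
    exact hNone q this
  · intro I θ r hr
    obtain ⟨t, ht, heq⟩ := Finset.mem_image.1 hr
    have h1 : t.1 = MLoc.nextr I θ := congrArg Prod.fst heq
    have h2 : t.2.map (· + d) = some r := congrArg Prod.snd heq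
    obtain ⟨r₀, hr₀, hr₀d⟩ := Option.map_eq_some_iff.1 h2
    have : (MLoc.nextr I θ, some r₀) ∈ γ := by
      rw [← h1, ← hr₀]
      exact ht
    rw [← hr₀d, hz I θ r₀ this]
  · rw [actW_delay]
    exact hW

lemma inv_step {φ₀ : MTL A} (hos : φ₀.oneSided) {γ γ' : Config (MLoc A)} {a : A}
    {χ : MLoc A × Option ℝ≥0 → TF (MLoc A)}
    (hInv : Inv φ₀ γ) (hD : (ataOf φ₀).DStep γ a χ γ') : Inv φ₀ γ' := by
  obtain ⟨hL, hNone, ⟨z, hz⟩, hW⟩ := hInv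
  obtain ⟨htar, Mo, hMo, rfl⟩ := hD
  have htar' : ∀ s ∈ γ, ∃ X, mlocDelta φ₀ s.1 a = some X ∧ (χ s) ∈ X.disjuncts :=
    htar
  have hmem : ∀ s ∈ γ, ∀ t ∈ Mo s, ClsP (locForm φ₀ s.1) s.2 t := by
    intro s hs t ht
    obtain ⟨X, hX, hdis⟩ := htar' s hs
    have h1 : t ∈ (χ s).atomStates s.2 := (hMo s hs).subset_atomStates t ht
    have h2 : t ∈ X.atomStates s.2 :=
      (TF.disjunct_le hdis (wloc φ₀) true (v := s.2)).2 h1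
    exact delta_classify hX h2
  refine ⟨?_, ?_, ⟨0, ?_⟩, ?_⟩
  · intro t ht
    obtain ⟨s, hs, hts⟩ := Finset.mem_biUnion.1 ht
    rcases hmem s hs t hts with ⟨I, θ, hsub, rfl⟩ | ⟨u, hsub, hform, _⟩
    · exact Or.inr (Or.inr ⟨I, θ, (hL s hs).subfs_sub _ hsub, rfl⟩)
    · exact Or.inr (Or.inl ⟨u, (hL s hs).subfs_sub _ hsub, hform⟩)
  · intro q hq
    obtain ⟨s, hs, hts⟩ := Finset.mem_biUnion.1 hq
    rcases hmem s hs (q, none) hts with ⟨I, θ, _, heq⟩ | ⟨u, hsub, hform, hval⟩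
    · exact absurd heq (by intro h; cases h)
    · rcases hval with h | ⟨_, hp⟩ | h
      · exact absurd h (by intro h; cases h)
      · exact ⟨u, hp, hform⟩
      · have hs2 : s.2 = none := h.symm
        have hsγ : (s.1, (none : Option ℝ≥0)) ∈ γ := by
          rw [← hs2]
          exact hs
        obtain ⟨θ, hθp, hθe⟩ := hNone s.1 hsγ
        have hup : u.isPure = true := by
          apply MTL.isPure_of_mem_subfs hθp
          rw [hθe] at hsub
          exact hsub
        exact ⟨u, hup, hform⟩
  · intro I θ r hr
    obtain ⟨s, hs, hts⟩ := Finset.mem_biUnion.1 hr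
    rcases hmem s hs (MLoc.nextr I θ, some r) hts with ⟨I', θ', _, heq⟩ |
      ⟨u, _, hform, _⟩
    · exact Option.some.inj (congrArg Prod.snd heq)
    · exact absurd hform (by simp)
  · have hbound : ∀ s ∈ γ, actW (wloc φ₀) (Mo s) ≤
        (if s.2 ≠ none then wloc φ₀ s.1 else 0) := by
      intro s hs
      obtain ⟨X, hX, hdis⟩ := htar' s hs
      have h1 : actW (wloc φ₀) (Mo s) ≤ (χ s).wBound (wloc φ₀) s.2.isSome :=
        (hMo s hs).actW_le _
      have h2 : (χ s).wBound (wloc φ₀) s.2.isSome ≤ X.wBound (wloc φ₀) s.2.isSome :=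
        (TF.disjunct_le hdis (wloc φ₀) s.2.isSome (v := s.2)).1
      rcases hs2 : s.2 with _ | r
      · rw [hs2] at h1 h2
        have hsγ : (s.1, (none : Option ℝ≥0)) ∈ γ := by rw [← hs2]; exact hs
        obtain ⟨θ, hθp, hθe⟩ := hNone s.1 hsγ
        rw [hθe] at hX
        have h3 : X.wBound (wloc φ₀) false = 0 := delta_wBound_false_of_pure hθp hX
        simp only [hs2, ne_eq, not_true_eq_false, if_neg, ite_false]
        simp only [Option.isSome_none] at h1 h2
        omega
      · rw [hs2] at h1 h2
        simp only [Option.isSome_some] at h1 h2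
        have h3 : X.wBound (wloc φ₀) true ≤ wloc φ₀ s.1 :=
          delta_wBound_true hos (hL s hs) hX
        simp only [hs2, ne_eq, reduceCtorEq, not_false_eq_true, if_pos, ite_true]
        omega
    calc actW (wloc φ₀) (γ.biUnion Mo)
        ≤ ∑ s ∈ γ, actW (wloc φ₀) (Mo s) := actW_biUnion_le _ _ _
      _ ≤ ∑ s ∈ γ, (if s.2 ≠ none then wloc φ₀ s.1 else 0) :=
          Finset.sum_le_sum hbound
      _ = actW (wloc φ₀) γ := (Finset.sum_filter _ _).symm
      _ ≤ max 1 (bW φ₀) := hW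

end WidthMain2

section WidthFinal

open Finset

variable {A : Type*} [DecidableEq A]

def nextKey (φ₀ : MTL A) : MLoc A → MTL A
  | .nextr I θ => MTL.next I θ
  | _ => φ₀

@[simp] lemma nextKey_nextr (φ₀ : MTL A) (I : NInterval) (θ : MTL A) :
    nextKey φ₀ (MLoc.nextr I θ) = MTL.next I θ := rfl

lemma width_le_of_inv {φ₀ : MTL A} {γ : Config (MLoc A)} (h : Inv φ₀ γ) :
    γ.width ≤ max 1 (bW φ₀) + φ₀.subfs.length := by
  classical
  obtain ⟨hL, -, ⟨z, hz⟩, hW⟩ := h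
  set P : MLoc A × Option ℝ≥0 → Prop := fun s => ∃ I θ, s.1 = MLoc.nextr I θ with hP
  set T : Config (MLoc A) := γ.filter (fun s => s.2 ≠ none) with hT
  have hwidth : γ.width = T.card := by
    unfold Config.width
    rw [hT]
  have hsplit : T.card ≤ (T.filter P).card + (T.filter (fun s => ¬ P s)).card := by
    have h2 := Finset.card_union_le (T.filter P) (T.filter (fun s => ¬ P s))
    rw [Finset.filter_union_filter_not_eq P T] at h2
    exact h2
  have hA : (T.filter P).card ≤ φ₀.subfs.length := by
    have h1 : (T.filter P).card ≤ φ₀.subfs.toFinset.card := by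
      apply Finset.card_le_card_of_injOn (fun s => nextKey φ₀ s.1)
      · intro s hs
        rw [Finset.mem_coe, Finset.mem_filter] at hs
        obtain ⟨hsT, I, θ, hnl⟩ := hs
        rw [hT, Finset.mem_filter] at hsT
        rcases hL s hsT.1 with hst | ⟨θ', _, hst⟩ | ⟨I', θ', hmem', hst⟩
        · rw [hst] at hnl; exact absurd hnl (by intro h; cases h)
        · rw [hst] at hnl; exact absurd hnl (by intro h; cases h)
        · show nextKey φ₀ s.1 ∈ φ₀.subfs.toFinset
          rw [hst, List.mem_toFinset, nextKey_nextr]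
          exact hmem'
      · intro s hs s' hs' heq
        simp only [Finset.coe_filter, Set.mem_setOf_eq] at hs hs'
        obtain ⟨hsT, I, θ, hnl⟩ := hs
        obtain ⟨hsT', I', θ', hnl'⟩ := hs'
        rw [hT, Finset.mem_filter] at hsT hsT'
        have heq2 : nextKey φ₀ s.1 = nextKey φ₀ s'.1 := heq
        rw [hnl, hnl', nextKey_nextr, nextKey_nextr] at heq2
        obtain ⟨hI, hθ⟩ := MTL.next.inj heq2
        obtain ⟨r, hr⟩ := Option.ne_none_iff_exists'.1 hsT.2
        obtain ⟨r', hr'⟩ := Option.ne_none_iff_exists'.1 hsT'.2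
        have hrz : r = z := by
          apply hz I θ
          rw [← hnl, ← hr]
          exact hsT.1
        have hrz' : r' = z := by
          apply hz I' θ'
          rw [← hnl', ← hr']
          exact hsT'.1
        apply Prod.ext
        · rw [hnl, hnl', hI, hθ]
        · rw [hr, hr', hrz, hrz']
    exact le_trans h1 φ₀.subfs.toFinset_card_le
  have hB : (T.filter (fun s => ¬ P s)).card ≤ max 1 (bW φ₀) := by
    have h1 : (T.filter (fun s => ¬ P s)).card ≤
        ∑ s ∈ T.filter (fun s => ¬ P s), wloc φ₀ s.1 := by
      rw [Finset.card_eq_sum_ones]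
      apply Finset.sum_le_sum
      intro s hs
      rw [Finset.mem_filter] at hs
      obtain ⟨hsT, hnP⟩ := hs
      rw [hT, Finset.mem_filter] at hsT
      rcases hL s hsT.1 with hst | ⟨θ', _, hst⟩ | ⟨I', θ', _, hst⟩
      · rw [hst]
        exact le_max_left _ _
      · rw [hst]
        exact one_le_wloc_form φ₀ θ'
      · exact absurd ⟨I', θ', hst⟩ hnP
    have h2 : ∑ s ∈ T.filter (fun s => ¬ P s), wloc φ₀ s.1 ≤ actW (wloc φ₀) γ := by
      apply Finset.sum_le_sum_of_subset
      rw [hT]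
      exact Finset.filter_subset _ _
    exact le_trans h1 (le_trans h2 hW)
  rw [hwidth]
  omega

end WidthFinal



/-! ## STATEMENT 2 -/

/-- For every one-sided MTL formula `φ` there is a bound
`k_φ` such that every configuration reachable from the initial configuration of
`A'_φ` contains at most `k_φ` active states. -/
theorem statement2 {A : Type*} [Fintype A] [DecidableEq A] (φ : MTL A)
    (hos : φ.oneSided) :
    ∃ k : ℕ, (ataOf φ).WidthBounded k := by
  refine ⟨max 1 (bW φ) + φ.subfs.length, ?_⟩
  intro γ hreach
  have hInv : Inv φ γ := by
    induction hreach with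
    | refl => exact inv_init φ
    | delay d _ ih => exact inv_delay ih d
    | step a χ _ hD ih => exact inv_step hos ih hD
  exact width_le_of_inv hInv


end ATAPaper
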